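/- For a deterministic unary two-way automaton and any fixed pair of states (s, s'), the set Right_{s,s'} = {(N, T) : starting from configuration (s, 0) on tape {0,…,N+1}, the automaton reaches (s', N+1) at time T via a right traversal, i.e., without visiting position N+1 at any earlier time} is Presburger-definable, provided N exceeds the amplitudes of all states. -/

import Mathlib

/-- Tape symbols: left endmarker, the unary letter, right endmarker. -/
inductive TapeSym : Type
  | lmark | a | rmark

/-- A linear subset of ℕᵏ. -/
def IsLinearSet' {k : ℕ} (S : Set (Fin k → ℕ)) : Prop :=
  ∃ (m : ℕ) (a : Fin k → ℕ) (b : Fin m → Fin k → ℕ),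
    S = {v | ∃ c : Fin m → ℕ, v = a + ∑ j, c j • b j}

/-- A semilinear (equivalently, Presburger-definable) subset of ℕᵏ. -/
def IsSemilinearSet' {k : ℕ} (S : Set (Fin k → ℕ)) : Prop :=
  ∃ (m : ℕ) (f : Fin m → Set (Fin k → ℕ)),
    (∀ i, IsLinearSet' (f i)) ∧ S = ⋃ i, f i

/-- Eventually periodic subset of ℕ. -/
def EventuallyPeriodic (L : Set ℕ) : Prop :=
  ∃ n₀ p : ℕ, 1 ≤ p ∧ ∀ n, n₀ ≤ n → (n ∈ L ↔ n + p ∈ L)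

/-- The unary language {aⁿ : n ∈ L} is regular. -/
def UnaryRegular (L : Set ℕ) : Prop :=
  ∃ (σ : Type) (_ : Fintype σ) (dfa : DFA Unit σ),
    ∀ n : ℕ, List.replicate n () ∈ dfa.accepts ↔ n ∈ L

/-- The symbol scanned at position `p` on the tape `{0, …, N+1}`. -/
def symAt (N : ℕ) (p : ℤ) : TapeSym :=
  if p ≤ 0 then TapeSym.lmark else if (N : ℤ) + 1 ≤ p then TapeSym.rmark else TapeSym.a

/-- One step of a deterministic two-way unary automaton on the tape `{0, …, N+1}`. -/
def tstep {Q : Type} (δ : Q → TapeSym → Q × ℤ) (N : ℕ) (c : Q × ℤ) : Q × ℤ :=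
  ((δ c.1 (symAt N c.2)).1, c.2 + (δ c.1 (symAt N c.2)).2)

/-- The run after `t` steps from configuration `(s, p)` on the tape `{0, …, N+1}`. -/
def trun {Q : Type} (δ : Q → TapeSym → Q × ℤ) (N : ℕ) (s : Q) (p : ℤ) (t : ℕ) : Q × ℤ :=
  (tstep δ N)^[t] (s, p)

/-- One step of the free run (two-way infinite unary tape, no endmarkers). -/
def freeStep {Q : Type} (δa : Q → Q × ℤ) (c : Q × ℤ) : Q × ℤ :=
  ((δa c.1).1, c.2 + (δa c.1).2)

/-- The free run from state `s` (displacement measured from the start). -/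
def freeRun {Q : Type} (δa : Q → Q × ℤ) (s : Q) (t : ℕ) : Q × ℤ :=
  (freeStep δa)^[t] (s, 0)

/-- The amplitude of a state `s`: the width of the range of displacements along
the first loop of its free run (which is contained in the first `|Q| + 1` steps). -/
noncomputable def amplitude {Q : Type} [Fintype Q] (δa : Q → Q × ℤ) (s : Q) : ℤ :=
  ((Finset.range (Fintype.card Q + 1)).image fun i => (freeRun δa s i).2).max'
      (by simp [Finset.nonempty_range_iff]) -
  ((Finset.range (Fintype.card Q + 1)).image fun i => (freeRun δa s i).2).min'
      (by simp [Finset.nonempty_range_iff])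


lemma isLinearSet_singleton {k : ℕ} (a : Fin k → ℕ) : IsLinearSet' {a} := by
  refine ⟨0, a, Fin.elim0, ?_⟩
  ext v; simp [eq_comm]

lemma isLinearSet_line {k : ℕ} (a b : Fin k → ℕ) :
    IsLinearSet' {v | ∃ c : ℕ, v = a + c • b} := by
  refine ⟨1, a, fun _ => b, ?_⟩
  ext v
  constructor
  · rintro ⟨c, rfl⟩; exact ⟨fun _ => c, by simp⟩
  · rintro ⟨c, rfl⟩; exact ⟨c 0, by simp⟩

lemma IsLinearSet'.isSemilinearSet {k : ℕ} {S : Set (Fin k → ℕ)} (h : IsLinearSet' S) :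
    IsSemilinearSet' S := ⟨1, fun _ => S, fun _ => h, (Set.iUnion_const S).symm⟩

lemma isSemilinearSet_iUnion {k : ℕ} {ι : Type} [Fintype ι] (g : ι → Set (Fin k → ℕ))
    (h : ∀ i, IsSemilinearSet' (g i)) : IsSemilinearSet' (⋃ i, g i) := by
  choose m f hlin heq using h
  classical
  refine ⟨Fintype.card (Σ i, Fin (m i)),
    fun j => f ((Fintype.equivFin (Σ i, Fin (m i))).symm j).1
      ((Fintype.equivFin (Σ i, Fin (m i))).symm j).2, fun j => hlin _ _, ?_⟩
  ext x
  simp only [Set.mem_iUnion, heq]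
  constructor
  · rintro ⟨i, j, hj⟩
    refine ⟨Fintype.equivFin (Σ i, Fin (m i)) ⟨i, j⟩, ?_⟩
    rw [Equiv.symm_apply_apply]
    exact hj
  · rintro ⟨j, hj⟩
    exact ⟨((Fintype.equivFin (Σ i, Fin (m i))).symm j).1,
      ((Fintype.equivFin (Σ i, Fin (m i))).symm j).2, hj⟩

lemma isSemilinearSet_biUnion {k : ℕ} {S : Set (Fin k → ℕ)} (hS : S.Finite)
    (L : (Fin k → ℕ) → Set (Fin k → ℕ)) (h : ∀ b ∈ S, IsSemilinearSet' (L b)) :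
    IsSemilinearSet' (⋃ b ∈ S, L b) := by
  haveI := hS.fintype
  rw [Set.biUnion_eq_iUnion]
  exact isSemilinearSet_iUnion _ (fun b => h b b.2)

lemma Set.Finite.isSemilinearSet {k : ℕ} {S : Set (Fin k → ℕ)} (hS : S.Finite) :
    IsSemilinearSet' S := by
  have h : S = ⋃ b ∈ S, {b} := by simp
  rw [h]
  exact isSemilinearSet_biUnion hS _ (fun b _ => (isLinearSet_singleton b).isSemilinearSet)

/-- Symbol on the one-way-infinite tape with only a left endmarker. -/
def isym (p : ℤ) : TapeSym := if p ≤ 0 then TapeSym.lmark else TapeSym.a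

def istep {Q : Type} (δ : Q → TapeSym → Q × ℤ) (c : Q × ℤ) : Q × ℤ :=
  ((δ c.1 (isym c.2)).1, c.2 + (δ c.1 (isym c.2)).2)

def irun {Q : Type} (δ : Q → TapeSym → Q × ℤ) (s : Q) (t : ℕ) : Q × ℤ :=
  (istep δ)^[t] (s, 0)

section Run

variable {Q : Type} (δ : Q → TapeSym → Q × ℤ) (s : Q)

lemma irun_zero : irun δ s 0 = (s, 0) := rfl

lemma irun_succ (t : ℕ) : irun δ s (t + 1) = istep δ (irun δ s t) :=
  Function.iterate_succ_apply' _ _ _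

lemma irun_add (k t : ℕ) : irun δ s (k + t) = (istep δ)^[k] (irun δ s t) :=
  Function.iterate_add_apply _ _ _ _

lemma trun_succ (N : ℕ) (t : ℕ) :
    trun δ N s 0 (t + 1) = tstep δ N (trun δ N s 0 t) :=
  Function.iterate_succ_apply' _ _ _

lemma istep_pos_le (hδ : ∀ q x, (δ q x).2 = -1 ∨ (δ q x).2 = 0 ∨ (δ q x).2 = 1) (c : Q × ℤ) : (istep δ c).2 ≤ c.2 + 1 := by
  have := hδ c.1 (isym c.2)
  simp only [istep]
  omega

lemma tstep_pos_le (hδ : ∀ q x, (δ q x).2 = -1 ∨ (δ q x).2 = 0 ∨ (δ q x).2 = 1) (N : ℕ) (c : Q × ℤ) : (tstep δ N c).2 ≤ c.2 + 1 := by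
  have := hδ c.1 (symAt N c.2)
  simp only [tstep]
  omega

lemma irun_pos_le (hδ : ∀ q x, (δ q x).2 = -1 ∨ (δ q x).2 = 0 ∨ (δ q x).2 = 1) (N : ℕ) :
    ∀ t, (∀ u ≤ t, (irun δ s u).2 ≠ (N : ℤ) + 1) → (irun δ s t).2 ≤ (N : ℤ) := by
  intro t
  induction t with
  | zero => intro _; simp [irun_zero]
  | succ t ih =>
    intro h
    have h1 : (irun δ s t).2 ≤ (N : ℤ) := ih (fun u hu => h u (by omega))
    have h2 : (irun δ s (t + 1)).2 ≤ (irun δ s t).2 + 1 := by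
      rw [irun_succ]; exact istep_pos_le δ hδ _
    have h3 := h (t + 1) le_rfl
    omega

lemma trun_pos_le (hδ : ∀ q x, (δ q x).2 = -1 ∨ (δ q x).2 = 0 ∨ (δ q x).2 = 1) (N : ℕ) :
    ∀ t, (∀ u ≤ t, (trun δ N s 0 u).2 ≠ (N : ℤ) + 1) → (trun δ N s 0 t).2 ≤ (N : ℤ) := by
  intro t
  induction t with
  | zero => intro _; simp [trun]
  | succ t ih =>
    intro h
    have h1 : (trun δ N s 0 t).2 ≤ (N : ℤ) := ih (fun u hu => h u (by omega))
    have h2 : (trun δ N s 0 (t + 1)).2 ≤ (trun δ N s 0 t).2 + 1 := by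
      rw [trun_succ]; exact tstep_pos_le δ hδ _ _
    have h3 := h (t + 1) le_rfl
    omega

lemma symAt_eq_isym (N : ℕ) (p : ℤ) (hp : p ≤ (N : ℤ)) : symAt N p = isym p := by
  unfold symAt isym
  split_ifs with h1 h2
  · rfl
  · omega
  · rfl

lemma trun_eq_irun (N : ℕ) :
    ∀ t, (∀ u < t, (irun δ s u).2 ≤ (N : ℤ)) → trun δ N s 0 t = irun δ s t := by
  intro t
  induction t with
  | zero => intro _; rfl
  | succ t ih =>
    intro h
    have heq : trun δ N s 0 t = irun δ s t := ih (fun u hu => h u (by omega))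
    rw [trun_succ, irun_succ, heq]
    have hb : (irun δ s t).2 ≤ (N : ℤ) := h t (by omega)
    simp only [tstep, istep, symAt_eq_isym N _ hb]

lemma trun_eq_irun_of_irun (hδ : ∀ q x, (δ q x).2 = -1 ∨ (δ q x).2 = 0 ∨ (δ q x).2 = 1) (N : ℕ) (T : ℕ)
    (h : ∀ u < T, (irun δ s u).2 ≠ (N : ℤ) + 1) :
    ∀ t ≤ T, trun δ N s 0 t = irun δ s t := by
  intro t ht
  apply trun_eq_irun δ s N
  intro u hu
  exact irun_pos_le δ s hδ N u (fun v hv => h v (by omega))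

lemma trun_eq_irun_of_trun (hδ : ∀ q x, (δ q x).2 = -1 ∨ (δ q x).2 = 0 ∨ (δ q x).2 = 1) (N : ℕ) (T : ℕ)
    (h : ∀ u < T, (trun δ N s 0 u).2 ≠ (N : ℤ) + 1) :
    ∀ t ≤ T, trun δ N s 0 t = irun δ s t := by
  intro t
  induction t using Nat.strong_induction_on with
  | _ t ih =>
    intro ht
    have heq : ∀ v < t, trun δ N s 0 v = irun δ s v := fun v hv => ih v hv (by omega)
    apply trun_eq_irun δ s N
    intro u hu
    apply irun_pos_le δ s hδ N u
    intro v hv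
    rw [← heq v (by omega)]
    exact h v (by omega)

lemma core_iff (hδ : ∀ q x, (δ q x).2 = -1 ∨ (δ q x).2 = 0 ∨ (δ q x).2 = 1) (s' : Q) (N T : ℕ) :
    (trun δ N s 0 T = (s', (N : ℤ) + 1) ∧ ∀ t < T, (trun δ N s 0 t).2 ≠ (N : ℤ) + 1) ↔
    (irun δ s T = (s', (N : ℤ) + 1) ∧ ∀ t < T, (irun δ s t).2 ≠ (N : ℤ) + 1) := by
  constructor
  · rintro ⟨h1, h2⟩
    have key := trun_eq_irun_of_trun δ s hδ N T h2
    exact ⟨by rw [← key T le_rfl]; exact h1,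
      fun t ht => by rw [← key t (le_of_lt ht)]; exact h2 t ht⟩
  · rintro ⟨h1, h2⟩
    have key := trun_eq_irun_of_irun δ s hδ N T h2
    exact ⟨by rw [key T le_rfl]; exact h1,
      fun t ht => by rw [key t (le_of_lt ht)]; exact h2 t ht⟩

end Run

section EP

variable {Q : Type} (δ : Q → TapeSym → Q × ℤ) (s : Q)

lemma ep_of_uniform [Finite Q] (t₀ : ℕ) (f : Q → Q × ℤ)
    (hf : ∀ t, t₀ ≤ t → istep δ (irun δ s t) =
      ((f (irun δ s t).1).1, (irun δ s t).2 + (f (irun δ s t).1).2)) :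
    ∃ t₁ per d, 1 ≤ per ∧
      ∀ t, t₁ ≤ t → irun δ s (t + per) = ((irun δ s t).1, (irun δ s t).2 + d) := by
  set st : ℕ → Q := fun k => (irun δ s (t₀ + k)).1 with hst_def
  set pos : ℕ → ℤ := fun k => (irun δ s (t₀ + k)).2 with hpos_def
  have hstep : ∀ k, irun δ s (t₀ + (k + 1)) =
      ((f (st k)).1, pos k + (f (st k)).2) := by
    intro k
    have : t₀ + (k + 1) = (t₀ + k) + 1 := by omega
    rw [this, irun_succ, hf (t₀ + k) (by omega)]
  have hst : ∀ k, st (k + 1) = (f (st k)).1 := by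
    intro k; simp only [hst_def]; rw [hstep k]
  have hpos : ∀ k, pos (k + 1) = pos k + (f (st k)).2 := by
    intro k; simp only [hpos_def]; rw [hstep k]
  have hiter : ∀ a j, st (a + j) = (fun q => (f q).1)^[j] (st a) := by
    intro a j
    induction j with
    | zero => rfl
    | succ j ih =>
      have : a + (j + 1) = (a + j) + 1 := by omega
      rw [this, hst, ih, Function.iterate_succ_apply']
  -- pigeonhole
  obtain ⟨x, y, hxy, hsteq⟩ := Finite.exists_ne_map_eq_of_infinite st
  wlog hlt : x < y generalizing x y
  · exact this y x hxy.symm hsteq.symm (by omega)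
  set per := y - x with hper_def
  have hyx : y = x + per := by omega
  have hper1 : 1 ≤ per := by omega
  have hstper : ∀ j, st (x + j + per) = st (x + j) := by
    intro j
    have e1 : x + j + per = (x + per) + j := by omega
    rw [e1, hiter (x + per) j, ← hyx, ← hsteq, ← hiter x j]
  set d := pos (x + per) - pos x with hd_def
  have hposper : ∀ j, pos (x + j + per) = pos (x + j) + d := by
    intro j
    induction j with
    | zero => simp only [Nat.add_zero]; omega
    | succ j ih =>
      have e1 : x + (j + 1) + per = (x + j + per) + 1 := by omega
      have e2 : x + (j + 1) = (x + j) + 1 := by omega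
      rw [e1, e2, hpos, hpos, hstper j, ih]
      ring
  refine ⟨t₀ + x, per, d, hper1, ?_⟩
  intro t ht
  have h1 := hstper (t - t₀ - x)
  have h2 := hposper (t - t₀ - x)
  have e : t₀ + (x + (t - t₀ - x)) = t := by omega
  have e2 : t₀ + (x + (t - t₀ - x) + per) = t + per := by omega
  simp only [hst_def, hpos_def, e, e2] at h1 h2
  exact Prod.ext_iff.mpr ⟨h1, h2⟩

lemma ep [Finite Q] (hδ : ∀ q x, (δ q x).2 = -1 ∨ (δ q x).2 = 0 ∨ (δ q x).2 = 1) :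
    ∃ t₁ per d, 1 ≤ per ∧
      ∀ t, t₁ ≤ t → irun δ s (t + per) = ((irun δ s t).1, (irun δ s t).2 + d) := by
  classical
  by_cases hA : ∃ t₀, ∀ t, t₀ ≤ t → 1 ≤ (irun δ s t).2
  · obtain ⟨t₀, h⟩ := hA
    apply ep_of_uniform δ s t₀ (fun q => δ q TapeSym.a)
    intro t ht
    have h1 : ¬ (irun δ s t).2 ≤ 0 := by have := h t ht; omega
    simp only [istep, isym, if_neg h1]
  by_cases hB : ∃ t₀, ∀ t, t₀ ≤ t → (irun δ s t).2 ≤ 0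
  · obtain ⟨t₀, h⟩ := hB
    apply ep_of_uniform δ s t₀ (fun q => δ q TapeSym.lmark)
    intro t ht
    simp only [istep, isym, if_pos (h t ht)]
  -- crossing case: infinitely many zeros
  push_neg at hA hB
  have hz : ∀ t₀, ∃ t, t₀ ≤ t ∧ (irun δ s t).2 = 0 := by
    intro t₀
    obtain ⟨u, hu, hu0⟩ := hA t₀
    obtain ⟨w, hw, hw1⟩ := hB u
    have hu0' : (irun δ s u).2 ≤ 0 := by omega
    have hex : ∃ n, u < n ∧ 1 ≤ (irun δ s n).2 := by
      refine ⟨w, ?_, by omega⟩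
      rcases eq_or_lt_of_le hw with h | h
      · exfalso; rw [← h] at hw1; omega
      · exact h
    set n := Nat.find hex with hn_def
    obtain ⟨hn1, hn2⟩ := Nat.find_spec hex
    rw [← hn_def] at hn1 hn2
    have hprev : (irun δ s (n - 1)).2 ≤ 0 := by
      rcases eq_or_lt_of_le (Nat.succ_le_of_lt hn1) with h | h
      · have : n - 1 = u := by omega
        rw [this]; exact hu0'
      · have hlt : n - 1 < n := by omega
        have := Nat.find_min hex hlt
        push_neg at this
        rcases Nat.lt_or_ge u (n-1) with h' | h'
        · have := this h'
          omega
        · have : n - 1 = u := by omega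
          rw [this]; exact hu0'
    have hstep : (irun δ s n).2 ≤ (irun δ s (n - 1)).2 + 1 := by
      have e : n = (n - 1) + 1 := by omega
      rw [e, irun_succ]
      exact istep_pos_le δ hδ _
    refine ⟨n - 1, by omega, by omega⟩
  -- build an infinite set of zero times
  have hZinf : {t : ℕ | (irun δ s t).2 = 0}.Infinite := by
    set g : ℕ → ℕ := fun n => Nat.rec (Classical.choose (hz 0))
      (fun _ prev => Classical.choose (hz (prev + 1))) n with hg
    have hg0 : (irun δ s (g 0)).2 = 0 := (Classical.choose_spec (hz 0)).2
    have hgs : ∀ n, g n < g (n + 1) ∧ (irun δ s (g (n + 1))).2 = 0 := by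
      intro n
      have hdef : g (n + 1) = Classical.choose (hz (g n + 1)) := rfl
      have hsp := Classical.choose_spec (hz (g n + 1))
      rw [← hdef] at hsp
      exact ⟨by omega, hsp.2⟩
    apply Set.infinite_of_injective_forall_mem
      (f := g) (strictMono_nat_of_lt_succ (fun n => (hgs n).1)).injective
    intro n
    cases n with
    | zero => exact hg0
    | succ n => exact (hgs n).2
  obtain ⟨a, ha, b, hb, hab, heq⟩ :=
    hZinf.exists_ne_map_eq_of_mapsTo (f := fun t => (irun δ s t).1)
      (Set.mapsTo_univ _ _) Set.finite_univ
  wlog hlt : a < b generalizing a b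
  · exact this b hb a ha hab.symm heq.symm (by omega)
  have hcab : irun δ s b = irun δ s a := by
    rw [Prod.ext_iff]
    exact ⟨heq.symm, by rw [ha, hb]⟩
  refine ⟨a, b - a, 0, by omega, ?_⟩
  intro t ht
  have e1 : t + (b - a) = (t - a) + b := by omega
  have e2 : t = (t - a) + a := by omega
  rw [e1, irun_add, hcab, ← irun_add, ← e2]
  simp
end EP

/-- for fixed states `s, s'`, the set of pairs `(N, T)` such that the
automaton performs a right traversal from `(s, 0)` to `(s', N+1)` in time `T`
(never visiting the right end earlier), with `N` exceeding all amplitudes, is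
Presburger-definable (semilinear). -/
theorem stmt8 {Q : Type} [Fintype Q] (δ : Q → TapeSym → Q × ℤ)
    (hδ : ∀ q x, (δ q x).2 = -1 ∨ (δ q x).2 = 0 ∨ (δ q x).2 = 1)
    (s s' : Q) :
    IsSemilinearSet' {v : Fin 2 → ℕ |
      (∀ q : Q, amplitude (fun q => δ q TapeSym.a) q < (v 0 : ℤ)) ∧
      trun δ (v 0) s 0 (v 1) = (s', (v 0 : ℤ) + 1) ∧
      ∀ t, t < v 1 → (trun δ (v 0) s 0 t).2 ≠ (v 0 : ℤ) + 1} := by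
  classical
  -- the amplitude condition is a threshold condition
  have hampnn : ∀ q : Q, 0 ≤ amplitude (fun q => δ q TapeSym.a) q := by
    intro q
    exact sub_nonneg.mpr (Finset.min'_le _ _ (Finset.max'_mem _ _))
  set NA : ℕ :=
    (Finset.univ.sup fun q : Q => (amplitude (fun q => δ q TapeSym.a) q).toNat) + 1
    with hNA_def
  have hNAiff : ∀ N : ℕ,
      (∀ q : Q, amplitude (fun q => δ q TapeSym.a) q < (N : ℤ)) ↔ NA ≤ N := by
    intro N
    constructor
    · intro h
      have hN0 : N ≠ 0 := by
        intro h0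
        have h1 := h s
        have h2 := hampnn s
        rw [h0] at h1
        simp at h1
        omega
      have h3 : Finset.univ.sup (fun q : Q =>
          (amplitude (fun q => δ q TapeSym.a) q).toNat) < N := by
        apply (Finset.sup_lt_iff (Nat.pos_of_ne_zero hN0)).mpr
        intro q _
        exact (Int.toNat_lt' (Nat.pos_of_ne_zero hN0)).mpr (h q)
      omega
    · intro h q
      have hN0 : N ≠ 0 := by omega
      have h1 : (amplitude (fun q => δ q TapeSym.a) q).toNat ≤
          Finset.univ.sup (fun q : Q =>
            (amplitude (fun q => δ q TapeSym.a) q).toNat) :=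
        Finset.le_sup (f := fun q : Q => (amplitude (fun q => δ q TapeSym.a) q).toNat)
          (Finset.mem_univ q)
      exact (Int.toNat_lt' (Nat.pos_of_ne_zero hN0)).mp (by omega)
  -- the hitting-time predicate on the endmarker-free (to the right) tape
  set Co : ℕ → ℕ → Prop := fun N T =>
    irun δ s T = (s', (N : ℤ) + 1) ∧ ∀ t < T, (irun δ s t).2 ≠ (N : ℤ) + 1
    with hCo_def
  have hsetEq : {v : Fin 2 → ℕ |
      (∀ q : Q, amplitude (fun q => δ q TapeSym.a) q < (v 0 : ℤ)) ∧
      trun δ (v 0) s 0 (v 1) = (s', (v 0 : ℤ) + 1) ∧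
      ∀ t, t < v 1 → (trun δ (v 0) s 0 t).2 ≠ (v 0 : ℤ) + 1} =
      {v : Fin 2 → ℕ | NA ≤ v 0 ∧ Co (v 0) (v 1)} := by
    ext v
    simp only [Set.mem_setOf_eq, hCo_def]
    exact and_congr (hNAiff (v 0)) (core_iff δ s hδ s' (v 0) (v 1))
  rw [hsetEq]
  -- uniqueness of first hitting times
  have hUniq : ∀ (z : ℤ) (T T' : ℕ), (irun δ s T).2 = z →
      (∀ t < T, (irun δ s t).2 ≠ z) → (irun δ s T').2 = z →
      (∀ t < T', (irun δ s t).2 ≠ z) → T = T' := by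
    intro z T T' h1 h2 h3 h4
    rcases lt_trichotomy T T' with h | h | h
    · exact absurd h1 (h4 T h)
    · exact h
    · exact absurd h3 (h2 T' h)
  -- eventual periodicity of the infinite run
  obtain ⟨t₁, per, d, hper, hEP⟩ := ep δ s hδ
  set B : ℕ := (Finset.range (t₁ + per)).sup (fun t => (irun δ s t).2.toNat) with hB_def
  have hBnd : ∀ t, t < t₁ + per → (irun δ s t).2 ≤ (B : ℤ) := by
    intro t ht
    have h1 : (irun δ s t).2 ≤ ((irun δ s t).2.toNat : ℤ) := Int.self_le_toNat _
    have h2 : (irun δ s t).2.toNat ≤ B :=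
      hB_def ▸ Finset.le_sup (f := fun t => (irun δ s t).2.toNat) (Finset.mem_range.mpr ht)
    omega
  have hK : ∀ T : ℕ, (B : ℤ) < (irun δ s T).2 → t₁ + per ≤ T := by
    intro T h
    by_contra hc
    have := hBnd T (by omega)
    omega
  rcases le_or_gt d 0 with hd | hd
  · -- nonpositive drift : positions stay bounded, the set is finite
    have hub : ∀ t, (irun δ s t).2 ≤ (B : ℤ) := by
      intro t
      induction t using Nat.strong_induction_on with
      | _ t ih =>
        rcases lt_or_ge t (t₁ + per) with h | h
        · exact hBnd t h
        · have e : (t - per) + per = t := by omega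
          have h2 := hEP (t - per) (by omega)
          rw [e] at h2
          have h3 := ih (t - per) (by omega)
          rw [h2]
          simp only
          omega
    apply Set.Finite.isSemilinearSet
    apply Set.Finite.of_finite_image (f := fun v => v 0)
    · apply Set.Finite.subset (Set.finite_Iic B)
      rintro n ⟨v, hv, rfl⟩
      obtain ⟨hv1, hv2⟩ := hv
      rw [hCo_def] at hv2
      have h1 : (irun δ s (v 1)).2 = (v 0 : ℤ) + 1 := by rw [hv2.1]
      have h2 := hub (v 1)
      simp only [Set.mem_Iic]
      omega
    · rintro v hv w hw h01
      simp only at h01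
      obtain ⟨hv1, hv2⟩ := hv
      obtain ⟨hw1, hw2⟩ := hw
      rw [hCo_def] at hv2 hw2
      have hw2' : irun δ s (w 1) = (s', (v 0 : ℤ) + 1) ∧
          ∀ t < w 1, (irun δ s t).2 ≠ (v 0 : ℤ) + 1 := by rw [h01]; exact hw2
      have hT : v 1 = w 1 :=
        hUniq ((v 0 : ℤ) + 1) (v 1) (w 1) (by rw [hv2.1]) hv2.2
          (by rw [hw2'.1]) hw2'.2
      funext i
      fin_cases i
      · exact h01
      · exact hT
  · -- positive drift
    set D : ℕ := d.toNat with hD_def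
    have hDd : (D : ℤ) = d := Int.toNat_of_nonneg (le_of_lt hd)
    have hD1 : 1 ≤ D := by omega
    set N₁ : ℕ := max NA B with hN₁_def
    have hBN₁ : B ≤ N₁ := le_max_right _ _
    have hAN₁ : NA ≤ N₁ := le_max_left _ _
    -- the one-step shift property
    have hstep : ∀ N T, B ≤ N → (Co N T ↔ Co (N + D) (T + per)) := by
      intro N T hBN
      rw [hCo_def]
      simp only
      constructor
      · rintro ⟨h1, h2⟩
        have hpos : (irun δ s T).2 = (N : ℤ) + 1 := by rw [h1]
        have hT : t₁ + per ≤ T := hK T (by rw [hpos]; omega)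
        constructor
        · have h3 := hEP T (by omega)
          rw [h1] at h3
          rw [h3]
          refine Prod.ext_iff.mpr ⟨rfl, ?_⟩
          push_cast
          omega
        · intro u hu hupos
          have hu1 : t₁ + per ≤ u := hK u (by rw [hupos]; push_cast; omega)
          have h4 := hEP (u - per) (by omega)
          have e : (u - per) + per = u := by omega
          rw [e] at h4
          have h5 : (irun δ s (u - per)).2 = (N : ℤ) + 1 := by
            have h6 := congrArg Prod.snd h4
            simp only at h6
            rw [hupos] at h6
            push_cast at h6
            omega
          exact h2 (u - per) (by omega) h5
      · rintro ⟨h1, h2⟩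
        have hpos : (irun δ s (T + per)).2 = ((N : ℤ) + (D : ℤ)) + 1 := by
          rw [h1]; push_cast; ring
        have hT : t₁ + per ≤ T + per := hK _ (by rw [hpos]; omega)
        have h3 := hEP T (by omega)
        have hfst : (irun δ s T).1 = s' := by
          have h6 := congrArg Prod.fst h3
          rw [h1] at h6
          simpa using h6.symm
        have hsnd : (irun δ s T).2 = (N : ℤ) + 1 := by
          have h6 := congrArg Prod.snd h3
          rw [h1] at h6
          simp only at h6
          push_cast at h6
          omega
        constructor
        · exact Prod.ext_iff.mpr ⟨hfst, hsnd⟩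
        · intro u hu hupos
          have hu1 : t₁ ≤ u := by
            have := hK u (by rw [hupos]; omega)
            omega
          have h4 := hEP u hu1
          apply h2 (u + per) (by omega)
          rw [h4]
          simp only
          rw [hupos]
          push_cast
          omega
    have hTlarge : ∀ N T, Co N T → B ≤ N → t₁ + per ≤ T := by
      intro N T h hBN
      rw [hCo_def] at h
      apply hK T
      have : (irun δ s T).2 = (N : ℤ) + 1 := by rw [h.1]
      rw [this]
      omega
    -- the period direction vector and the base points
    set dir : Fin 2 → ℕ := fun i => if i = 0 then D else per with hdir_def
    have hdir0 : dir 0 = D := by simp [hdir_def]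
    have hdir1 : dir 1 = per := by simp [hdir_def]
    set Base : Set (Fin 2 → ℕ) :=
      {v | (NA ≤ v 0 ∧ Co (v 0) (v 1)) ∧ v 0 < N₁ + D} with hBase_def
    have hBaseFin : Base.Finite := by
      apply Set.Finite.of_finite_image (f := fun v => v 0)
      · apply Set.Finite.subset (Set.finite_Iio (N₁ + D))
        rintro n ⟨v, hv, rfl⟩
        exact hv.2
      · rintro v hv w hw h01
        simp only at h01
        obtain ⟨⟨hv1, hv2⟩, _⟩ := hv
        obtain ⟨⟨hw1, hw2⟩, _⟩ := hw
        rw [hCo_def] at hv2 hw2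
        have hw2' : irun δ s (w 1) = (s', (v 0 : ℤ) + 1) ∧
            ∀ t < w 1, (irun δ s t).2 ≠ (v 0 : ℤ) + 1 := by rw [h01]; exact hw2
        have hT : v 1 = w 1 :=
          hUniq ((v 0 : ℤ) + 1) (v 1) (w 1) (by rw [hv2.1]) hv2.2
            (by rw [hw2'.1]) hw2'.2
        funext i
        fin_cases i
        · exact h01
        · exact hT
    -- going up along a line stays in the target set
    have hline : ∀ b : Fin 2 → ℕ, (NA ≤ b 0 ∧ Co (b 0) (b 1)) → N₁ ≤ b 0 →
        ∀ k : ℕ, NA ≤ (b + k • dir) 0 ∧ Co ((b + k • dir) 0) ((b + k • dir) 1) := by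
      intro b hb hbN k
      induction k with
      | zero => simpa using hb
      | succ k ih =>
        have hrw : b + (k + 1) • dir = (b + k • dir) + dir := by
          rw [succ_nsmul, add_assoc]
        rw [hrw]
        obtain ⟨hA1, hA2⟩ := ih
        have hw0 : (b + k • dir) 0 = b 0 + (k • dir) 0 := rfl
        have hBw : B ≤ (b + k • dir) 0 := by omega
        have hCoStep := (hstep _ _ hBw).mp hA2
        have e0 : ((b + k • dir) + dir) 0 = (b + k • dir) 0 + D := by
          show (b + k • dir) 0 + dir 0 = _
          rw [hdir0]
        have e1 : ((b + k • dir) + dir) 1 = (b + k • dir) 1 + per := by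
          show (b + k • dir) 1 + dir 1 = _
          rw [hdir1]
        rw [e0, e1]
        exact ⟨by omega, hCoStep⟩
    -- the decomposition
    have hdecomp : {v : Fin 2 → ℕ | NA ≤ v 0 ∧ Co (v 0) (v 1)} =
        ⋃ b ∈ Base, {v | ∃ k : ℕ, v = b + k • (if N₁ ≤ b 0 then dir else 0)} := by
      apply Set.Subset.antisymm
      · intro v hv
        have main : ∀ n : ℕ, ∀ v : Fin 2 → ℕ, (NA ≤ v 0 ∧ Co (v 0) (v 1)) → v 0 ≤ n →
            v ∈ ⋃ b ∈ Base, {u : Fin 2 → ℕ |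
              ∃ k : ℕ, u = b + k • (if N₁ ≤ b 0 then dir else 0)} := by
          intro n
          induction n with
          | zero =>
            intro v hv hv0
            simp only [Set.mem_iUnion]
            refine ⟨v, ⟨hv, by omega⟩, 0, by simp⟩
          | succ n ih =>
            intro v hv hv0
            rcases lt_or_ge (v 0) (N₁ + D) with hsmall | hge
            · simp only [Set.mem_iUnion]
              exact ⟨v, ⟨hv, hsmall⟩, 0, by simp⟩
            · have hTl : t₁ + per ≤ v 1 := hTlarge (v 0) (v 1) hv.2 (by omega)
              have e1 : (v 0 - D) + D = v 0 := by omega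
              have e2 : (v 1 - per) + per = v 1 := by omega
              have hCo' : Co (v 0 - D) (v 1 - per) := by
                apply (hstep (v 0 - D) (v 1 - per) (by omega)).mpr
                rw [e1, e2]
                exact hv.2
              set w : Fin 2 → ℕ := fun i => if i = 0 then v 0 - D else v 1 - per
                with hw_def
              have hw0 : w 0 = v 0 - D := by simp [hw_def]
              have hw1 : w 1 = v 1 - per := by simp [hw_def]
              have hwTar : NA ≤ w 0 ∧ Co (w 0) (w 1) := by
                rw [hw0, hw1]
                exact ⟨by omega, hCo'⟩
              have hwmem := ih w hwTar (by omega)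
              simp only [Set.mem_iUnion] at hwmem ⊢
              obtain ⟨b, hbB, k, hwk⟩ := hwmem
              have hbN : N₁ ≤ b 0 := by
                by_contra hc
                rw [if_neg hc, smul_zero, add_zero] at hwk
                have hwb : w 0 = b 0 := by rw [hwk]
                omega
              rw [if_pos hbN] at hwk
              refine ⟨b, hbB, k + 1, ?_⟩
              rw [if_pos hbN]
              have hvw : v = w + dir := by
                funext i
                fin_cases i
                · show v 0 = w 0 + dir 0
                  rw [hw0, hdir0]
                  omega
                · show v 1 = w 1 + dir 1
                  rw [hw1, hdir1]
                  omega
              rw [hvw, hwk, succ_nsmul, add_assoc]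
        exact main (v 0) v hv le_rfl
      · intro v hv
        simp only [Set.mem_iUnion] at hv
        obtain ⟨b, hbB, k, rfl⟩ := hv
        by_cases hb : N₁ ≤ b 0
        · simp only [if_pos hb]
          exact hline b hbB.1 hb k
        · simp only [if_neg hb, smul_zero, add_zero]
          exact hbB.1
    rw [hdecomp]
    apply isSemilinearSet_biUnion hBaseFin
    intro b _
    exact (isLinearSet_line b _).isSemilinearSet
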